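/- arXiv:2203.11251 — 3 statements merged into one kernel-verified Lean document; each statement's English description precedes it below -/
import Mathlib

section
/- Let c1, K, h, τ > 0 with c1 > 2K/(hτ²), and let c2 ≥ 2. Define f(λ) = c1 if λ ≤ 2K/(hτ²), and f(λ) = c1·(√(2K/(hλ))/τ)^{c2} otherwise. Set w = 2K/(hτ²c1) (so 0 < w < 1). Then f(c1) = c1·w^{c2/2} ≤ 2K/(hτ²) and f(c1·w^{c2/2}) = c1; hence the sequence λ_{k+1} = f(λ_k) starting from λ₀ = c1 is 2-periodic, cycling between c1 and c1·w^{c2/2}. -/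
open Real

/-- Theorem 1(ii): with large potential market `c1 > 2K/(hτ²)` and high sensitivity
`c2 ≥ 2`, the demand dynamics cycle between `c1` and `c1·w^{c2/2}` where
`w = 2K/(hτ²c1)`. -/
theorem stmt_1 (c1 K h τ c2 : ℝ) (hc1 : 0 < c1) (hK : 0 < K) (hh : 0 < h) (hτ : 0 < τ)
    (hbound : 2 * K / (h * τ ^ 2) < c1) (hc2 : 2 ≤ c2)
    (f : ℝ → ℝ)
    (hf : ∀ lam : ℝ, f lam = if lam ≤ 2 * K / (h * τ ^ 2) then c1
        else c1 * (Real.sqrt (2 * K / (h * lam)) / τ) ^ c2)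
    (w : ℝ) (hw : w = 2 * K / (h * τ ^ 2 * c1))
    (lam : ℕ → ℝ) (hlam0 : lam 0 = c1) (hrec : ∀ k : ℕ, lam (k + 1) = f (lam k)) :
    0 < w ∧ w < 1 ∧
    f c1 = c1 * w ^ (c2 / 2) ∧
    c1 * w ^ (c2 / 2) ≤ 2 * K / (h * τ ^ 2) ∧
    f (c1 * w ^ (c2 / 2)) = c1 ∧
    (∀ k : ℕ, lam (2 * k) = c1 ∧ lam (2 * k + 1) = c1 * w ^ (c2 / 2)) := by
  have hτ2 : (0:ℝ) < τ^2 := by positivity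
  have hA : (0:ℝ) < 2 * K / (h * τ ^ 2) := by positivity
  have hwpos : 0 < w := by rw [hw]; positivity
  have hwlt : w < 1 := by
    rw [hw]
    rw [div_lt_one (by positivity)]
    calc 2 * K = (2 * K / (h * τ^2)) * (h * τ^2) := by field_simp
    _ < c1 * (h * τ^2) := by exact mul_lt_mul_of_pos_right hbound (by positivity)
    _ = h * τ^2 * c1 := by ring
  -- key: √(2K/(h c1))/τ = w^(1/2)
  have hwval : 2 * K / (h * c1) = w * τ^2 := by rw [hw]; field_simp
  have hsq : Real.sqrt (2 * K / (h * c1)) / τ = w ^ ((1:ℝ)/2) := by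
    rw [hwval, Real.sqrt_mul hwpos.le, Real.sqrt_sq hτ.le,
      mul_div_assoc, div_self hτ.ne', mul_one]
    exact Real.sqrt_eq_rpow w
  have hfc1 : f c1 = c1 * w ^ (c2 / 2) := by
    rw [hf, if_neg (not_le.mpr hbound), hsq, ← Real.rpow_mul hwpos.le]
    congr 1
    ring_nf
  have hle : c1 * w ^ (c2 / 2) ≤ 2 * K / (h * τ ^ 2) := by
    have h1 : w ^ (c2/2) ≤ w ^ (1:ℝ) :=
      Real.rpow_le_rpow_of_exponent_ge hwpos hwlt.le (by linarith)
    rw [Real.rpow_one] at h1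
    calc c1 * w ^ (c2/2) ≤ c1 * w := by nlinarith
    _ = 2 * K / (h * τ^2) := by rw [hw]; field_simp
  have hflow : f (c1 * w ^ (c2 / 2)) = c1 := by rw [hf, if_pos hle]
  refine ⟨hwpos, hwlt, hfc1, hle, hflow, ?_⟩
  intro k
  induction k with
  | zero =>
    refine ⟨by simpa using hlam0, ?_⟩
    rw [show 2*0+1 = 0+1 by ring, hrec, hlam0, hfc1]
  | succ n ih =>
    have h1 : lam (2*(n+1)) = c1 := by
      rw [show 2*(n+1) = (2*n+1)+1 by ring, hrec, ih.2, hflow]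
    exact ⟨h1, by rw [hrec, h1, hfc1]⟩
end

section
/- Let c1, K, h, τ > 0 with c1 > 2K/(hτ²) and 0 < c2 < 2. Set w = 2K/(hτ²c1) ∈ (0,1). Define f(λ) = c1 if λ ≤ c1·w, and f(λ) = c1·(w·c1/λ)^{c2/2} otherwise. Then the sequence λ₁ = c1, λ_{k+1} = f(λ_k), satisfies λ_k = c1·w^{B_k} with B_k = ∑_{i=1}^{k−1}(c2/2)^i(−1)^{i−1}, λ_k > c1·w for all k ≥ 1, and λ_k converges to c1·w^{c2/(c2+2)}. -/
open Real Filter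

/-- Theorem 1(iii): for moderately sensitive customers (`c2 < 2`) and large potential
market (`c1 > 2K/(hτ²)`), the demand sequence starting at `c1` satisfies
`λ_k = c1·w^{B_k}` with `B_k = ∑_{i=1}^{k−1}(c2/2)^i(−1)^{i−1}`, stays above `c1·w`,
and converges to `c1·w^{c2/(c2+2)}`. -/
theorem stmt_4 (c1 K h τ c2 : ℝ) (hc1 : 0 < c1) (hK : 0 < K) (hh : 0 < h) (hτ : 0 < τ)
    (hbound : 2 * K / (h * τ ^ 2) < c1) (hc2 : 0 < c2) (hc2' : c2 < 2)
    (w : ℝ) (hw : w = 2 * K / (h * τ ^ 2 * c1))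
    (f : ℝ → ℝ)
    (hf : ∀ lam : ℝ, f lam = if lam ≤ c1 * w then c1
        else c1 * (w * c1 / lam) ^ (c2 / 2))
    (lam : ℕ → ℝ) (hlam1 : lam 1 = c1)
    (hrec : ∀ k : ℕ, 1 ≤ k → lam (k + 1) = f (lam k)) :
    0 < w ∧ w < 1 ∧
    (∀ k : ℕ, 1 ≤ k →
      lam k = c1 * w ^ (∑ i ∈ Finset.range (k - 1), (c2 / 2) ^ (i + 1) * (-1 : ℝ) ^ i) ∧
      c1 * w < lam k) ∧
    Tendsto (fun k => lam k) atTop (nhds (c1 * w ^ (c2 / (c2 + 2)))) := by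
  have hw0 : 0 < w := by rw [hw]; positivity
  have hw1 : w < 1 := by
    rw [hw, div_lt_one (by positivity)]
    calc 2 * K = 2 * K / (h * τ ^ 2) * (h * τ ^ 2) := by field_simp
      _ < c1 * (h * τ ^ 2) := mul_lt_mul_of_pos_right hbound (by positivity)
      _ = h * τ ^ 2 * c1 := by ring
  set B : ℕ → ℝ := fun k => ∑ i ∈ Finset.range (k - 1), (c2 / 2) ^ (i + 1) * (-1 : ℝ) ^ i
    with hBdef
  have hBrec : ∀ k : ℕ, 1 ≤ k → B (k + 1) = (c2 / 2) * (1 - B k) := by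
    intro k hk
    obtain ⟨m, rfl⟩ := Nat.exists_eq_add_of_le hk
    simp only [hBdef]
    rw [show 1 + m + 1 - 1 = m + 1 by omega, show 1 + m - 1 = m by omega,
      Finset.sum_range_succ', mul_sub, Finset.mul_sum]
    have : ∀ i, (c2 / 2) ^ (i + 1 + 1) * (-1 : ℝ) ^ (i + 1)
        = -(c2 / 2 * ((c2 / 2) ^ (i + 1) * (-1 : ℝ) ^ i)) := by
      intro i; ring
    simp_rw [this]
    rw [Finset.sum_neg_distrib]
    ring
  have hInv : ∀ k : ℕ, 1 ≤ k → lam k = c1 * w ^ (B k) ∧ 0 ≤ B k ∧ B k ≤ c2 / 2 := by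
    intro k hk
    induction k with
    | zero => omega
    | succ n ih =>
      rcases Nat.lt_or_ge 1 (n + 1) with h1 | h1
      · have hn : 1 ≤ n := by omega
        obtain ⟨hlamn, hB0, hB1⟩ := ih hn
        have hBk1 : B n < 1 := lt_of_le_of_lt hB1 (by linarith)
        have hgt : c1 * w < lam n := by
          rw [hlamn]
          have h2 : w ^ (1 : ℝ) < w ^ (B n) :=
            Real.rpow_lt_rpow_of_exponent_gt hw0 hw1 hBk1
          rw [Real.rpow_one] at h2
          exact mul_lt_mul_of_pos_left h2 hc1
        have hstep : lam (n + 1) = c1 * (w * c1 / lam n) ^ (c2 / 2) := by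
          rw [hrec n hn, hf, if_neg (not_le.mpr hgt)]
        have harg : w * c1 / lam n = w ^ (1 - B n) := by
          rw [hlamn, Real.rpow_sub hw0, Real.rpow_one]
          have hwB : w ^ B n ≠ 0 := ne_of_gt (Real.rpow_pos_of_pos hw0 _)
          field_simp
        have hval : lam (n + 1) = c1 * w ^ ((1 - B n) * (c2 / 2)) := by
          rw [hstep, harg, ← Real.rpow_mul hw0.le]
        have hBn1 : B (n + 1) = (1 - B n) * (c2 / 2) := by rw [hBrec n hn]; ring
        refine ⟨by rw [hval, hBn1], ?_, ?_⟩
        · rw [hBn1]; nlinarith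
        · rw [hBn1]; nlinarith
      · have hn : n = 0 := by omega
        subst hn
        have hB1 : B 1 = 0 := by simp [hBdef]
        refine ⟨?_, by rw [hB1], by rw [hB1]; positivity⟩
        rw [hlam1, hB1, Real.rpow_zero, mul_one]
  set L : ℝ := c2 / (c2 + 2) with hLdef
  have hLeq : L = (c2 / 2) * (1 - L) := by
    rw [hLdef]; field_simp; ring
  have hL0 : 0 < L := by rw [hLdef]; positivity
  have hdist : ∀ k : ℕ, 1 ≤ k → |B k - L| ≤ (c2 / 2) ^ (k - 1) * L := by
    intro k hk
    induction k with
    | zero => omega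
    | succ n ih =>
      rcases Nat.lt_or_ge 1 (n + 1) with h1 | h1
      · have hn : 1 ≤ n := by omega
        have hrecd : B (n + 1) - L = -(c2 / 2) * (B n - L) := by
          linear_combination hBrec n hn - hLeq
        rw [hrecd, abs_mul, abs_neg, abs_of_pos (by positivity : (0:ℝ) < c2 / 2)]
        have : (c2 / 2) ^ (n + 1 - 1) * L = (c2 / 2) * ((c2 / 2) ^ (n - 1) * L) := by
          rw [show n + 1 - 1 = (n - 1) + 1 by omega, pow_succ]; ring
        rw [this]
        exact mul_le_mul_of_nonneg_left (ih hn) (by positivity)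
      · have hn : n = 0 := by omega
        subst hn
        have hB1 : B 1 = 0 := by simp [hBdef]
        simp [hB1, abs_of_pos hL0]
  have hpow0 : Tendsto (fun k : ℕ => (c2 / 2) ^ (k - 1) * L) atTop (nhds 0) := by
    have h1 : Tendsto (fun k : ℕ => (c2 / 2) ^ k) atTop (nhds 0) :=
      tendsto_pow_atTop_nhds_zero_of_lt_one (by positivity) (by linarith)
    have h2 : Tendsto (fun k : ℕ => k - 1) atTop atTop := tendsto_sub_atTop_nat 1
    have := (h1.comp h2).mul_const L
    simpa using this
  have hBtend : Tendsto B atTop (nhds L) := by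
    have hsub : Tendsto (fun k => B k - L) atTop (nhds 0) := by
      apply squeeze_zero_norm' _ hpow0
      filter_upwards [eventually_atTop.mpr ⟨1, fun k hk => hdist k hk⟩] with k hk
      simpa [Real.norm_eq_abs] using hk
    have := hsub.add (tendsto_const_nhds (x := L))
    simpa using this
  refine ⟨hw0, hw1, ?_, ?_⟩
  · intro k hk
    obtain ⟨hlamk, hB0, hB1⟩ := hInv k hk
    refine ⟨hlamk, ?_⟩
    rw [hlamk]
    have h2 : w ^ (1 : ℝ) < w ^ (B k) :=
      Real.rpow_lt_rpow_of_exponent_gt hw0 hw1 (lt_of_le_of_lt hB1 (by linarith))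
    rw [Real.rpow_one] at h2
    exact mul_lt_mul_of_pos_left h2 hc1
  · have hwL : Tendsto (fun k => c1 * w ^ (B k)) atTop (nhds (c1 * w ^ L)) := by
      exact ((tendsto_const_nhds.rpow hBtend (Or.inl hw0.ne')).const_mul c1)
    refine hwL.congr' ?_
    filter_upwards [eventually_atTop.mpr ⟨1, fun k (hk : 1 ≤ k) => (hInv k hk).1⟩] with k hk
    exact hk.symm
end

section
/- Let h, λ_r, T > 0, a − bF ≥ 0, δ, r, M, F, τ > 0 and ε > 0. Suppose the KKT identity ((a−bF)/τ)(δr − hTδ/2 + F/M) + hλ_rt1/T = ω2 + ω3 holds with ω2, ω3 ≥ 0. Then the quantity ((a−bF)ε/τ)(δr − hTδ/2 + F/M) + (hλ_r/(2T))(2t1ε + ε²) is strictly positive, i.e., moving length ε from Phase 3 to Phase 1 strictly decreases the objective of model [M2]. -/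
open Real

/-- Second part of the proof of Lemma 2: given the KKT identity
`((a−bF)/τ)(δr − hTδ/2 + F/M) + hλ_r t1/T = ω2 + ω3` with `ω2, ω3 ≥ 0`, the
objective change from moving length `ε > 0` from Phase 3 to Phase 1, namely
`((a−bF)ε/τ)(δr − hTδ/2 + F/M) + (hλ_r/(2T))(2t1ε + ε²)`, is strictly positive. -/
theorem stmt_17 (a b F δ M r h τ lr T t1 ε ω2 ω3 : ℝ)
    (hh : 0 < h) (hlr : 0 < lr) (hT : 0 < T) (haF : 0 ≤ a - b * F)
    (hδ : 0 < δ) (hr : 0 < r) (hM : 0 < M) (hF : 0 < F) (hτ : 0 < τ)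
    (hε : 0 < ε) (hω2 : 0 ≤ ω2) (hω3 : 0 ≤ ω3)
    (hkkt : ((a - b * F) / τ) * (δ * r - h * T * δ / 2 + F / M) + h * lr * t1 / T
        = ω2 + ω3) :
    0 < ((a - b * F) * ε / τ) * (δ * r - h * T * δ / 2 + F / M)
        + (h * lr / (2 * T)) * (2 * t1 * ε + ε ^ 2) := by
  have key : ((a - b * F) * ε / τ) * (δ * r - h * T * δ / 2 + F / M)
        + (h * lr / (2 * T)) * (2 * t1 * ε + ε ^ 2)
      = ε * (((a - b * F) / τ) * (δ * r - h * T * δ / 2 + F / M) + h * lr * t1 / T)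
        + h * lr * ε ^ 2 / (2 * T) := by
    field_simp
    ring
  rw [key, hkkt]
  have : 0 < h * lr * ε ^ 2 / (2 * T) := by positivity
  nlinarith
end
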